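/- A permutation w ∈ S_n is 321-avoiding if and only if no reduced word of w contains three consecutive letters of the form j, j+1, j. -/

import Mathlib

open Equiv

/-- The simple transposition `s_i ∈ S_{n+1}`. -/
def simpleTransposition (n : ℕ) (i : Fin n) : Equiv.Perm (Fin (n + 1)) :=
  Equiv.swap i.castSucc i.succ

/-- Product of a word of simple transpositions. -/
def wordProd (n : ℕ) (l : List (Fin n)) : Equiv.Perm (Fin (n + 1)) :=
  (l.map (simpleTransposition n)).prod

/-- `l` is a reduced word for `w`: it expresses `w` with minimal length. -/
def IsReducedWord (n : ℕ) (w : Equiv.Perm (Fin (n + 1))) (l : List (Fin n)) : Prop :=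
  wordProd n l = w ∧ ∀ l' : List (Fin n), wordProd n l' = w → l.length ≤ l'.length

/-- `w` is 321-avoiding: there are no positions `a < b < c` with `w a > w b > w c`. -/
def Is321Avoiding (n : ℕ) (w : Equiv.Perm (Fin (n + 1))) : Prop :=
  ¬ ∃ a b c : Fin (n + 1), a < b ∧ b < c ∧ w c < w b ∧ w b < w a

namespace Aux321

variable {n : ℕ}

/-- The set of inversions of `w`. -/
def invSet (n : ℕ) (w : Equiv.Perm (Fin (n + 1))) : Finset (Fin (n + 1) × Fin (n + 1)) :=
  Finset.univ.filter fun p => p.1 < p.2 ∧ w p.2 < w p.1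

/-- The number of inversions of `w`. -/
def invNum (n : ℕ) (w : Equiv.Perm (Fin (n + 1))) : ℕ := (invSet n w).card

lemma mem_invSet {w : Equiv.Perm (Fin (n + 1))} {p : Fin (n + 1) × Fin (n + 1)} :
    p ∈ invSet n w ↔ p.1 < p.2 ∧ w p.2 < w p.1 := by
  simp [invSet]

lemma swap_lt {j : Fin n} {a b : Fin (n + 1)} (hab : a < b)
    (hne : ¬(a = j.castSucc ∧ b = j.succ)) :
    Equiv.swap j.castSucc j.succ a < Equiv.swap j.castSucc j.succ b := by
  rw [Equiv.swap_apply_def, Equiv.swap_apply_def]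
  have h1 : (j.castSucc : ℕ) = j := rfl
  have h2 : (j.succ : ℕ) = j + 1 := rfl
  rw [Fin.lt_def] at hab ⊢
  rw [not_and_or] at hne
  split_ifs <;> omega

lemma wordProd_nil : wordProd n [] = 1 := rfl

lemma wordProd_cons (j : Fin n) (l : List (Fin n)) :
    wordProd n (j :: l) = simpleTransposition n j * wordProd n l := by
  simp [wordProd]

lemma wordProd_append (l1 l2 : List (Fin n)) :
    wordProd n (l1 ++ l2) = wordProd n l1 * wordProd n l2 := by
  simp [wordProd]

lemma wordProd_singleton (j : Fin n) :
    wordProd n [j] = simpleTransposition n j := by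
  simp [wordProd]

lemma card_erase_eq (w : Equiv.Perm (Fin (n + 1))) (j : Fin n) :
    ((invSet n (w * simpleTransposition n j)).erase (j.castSucc, j.succ)).card
      = ((invSet n w).erase (j.castSucc, j.succ)).card := by
  set s := Equiv.swap j.castSucc j.succ with hs
  have hss : ∀ x, s (s x) = x := fun x => Equiv.swap_apply_self _ _ x
  have key : ∀ (u : Equiv.Perm (Fin (n+1))) (p : Fin (n+1) × Fin (n+1)),
      p ∈ (invSet n (u * simpleTransposition n j)).erase (j.castSucc, j.succ) →
      (s p.1, s p.2) ∈ (invSet n u).erase (j.castSucc, j.succ) := by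
    intro u p hp
    rw [Finset.mem_erase, mem_invSet] at hp
    obtain ⟨hpe, hlt, hval⟩ := hp
    have hne : ¬(p.1 = j.castSucc ∧ p.2 = j.succ) := by
      intro ⟨h1, h2⟩; exact hpe (Prod.ext h1 h2)
    have hlt' : s p.1 < s p.2 := swap_lt hlt hne
    rw [Finset.mem_erase, mem_invSet]
    refine ⟨?_, hlt', ?_⟩
    · intro hcontra
      have e1 : s p.1 = j.castSucc := congrArg Prod.fst hcontra
      have e2 : s p.2 = j.succ := congrArg Prod.snd hcontra
      have : p.1 = s j.castSucc := by rw [← e1, hss]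
      have h2' : p.2 = s j.succ := by rw [← e2, hss]
      rw [Equiv.swap_apply_left] at this
      rw [Equiv.swap_apply_right] at h2'
      have : p.2 < p.1 := by rw [this, h2']; exact j.castSucc_lt_succ
      exact absurd hlt (not_lt.2 this.le)
    · simpa [simpleTransposition, hs] using hval
  refine Finset.card_bij (fun p _ => (s p.1, s p.2)) (fun p hp => key w p hp) ?_ ?_
  · intro p hp q hq hpq
    have h1 : s p.1 = s q.1 := congrArg Prod.fst hpq
    have h2 : s p.2 = s q.2 := congrArg Prod.snd hpq
    exact Prod.ext (s.injective h1) (s.injective h2)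
  · intro q hq
    refine ⟨(s q.1, s q.2), ?_, by simp [hss]⟩
    have hq' : q ∈ (invSet n (w * simpleTransposition n j * simpleTransposition n j)).erase
        (j.castSucc, j.succ) := by
      have : w * simpleTransposition n j * simpleTransposition n j = w := by
        rw [mul_assoc]; simp [simpleTransposition, Equiv.swap_mul_self]
      rwa [this]
    exact key (w * simpleTransposition n j) q hq'

lemma pair_mem_iff (w : Equiv.Perm (Fin (n + 1))) (j : Fin n) :
    (j.castSucc, j.succ) ∈ invSet n w ↔ w j.succ < w j.castSucc := by
  rw [mem_invSet]
  exact ⟨fun h => h.2, fun h => ⟨j.castSucc_lt_succ, h⟩⟩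

lemma mul_swap_apply_castSucc (w : Equiv.Perm (Fin (n + 1))) (j : Fin n) :
    (w * simpleTransposition n j) j.castSucc = w j.succ := by
  simp [simpleTransposition, Equiv.Perm.mul_apply]

lemma mul_swap_apply_succ (w : Equiv.Perm (Fin (n + 1))) (j : Fin n) :
    (w * simpleTransposition n j) j.succ = w j.castSucc := by
  simp [simpleTransposition, Equiv.Perm.mul_apply]

lemma mul_swap_apply_of_ne (w : Equiv.Perm (Fin (n + 1))) (j : Fin n) (x : Fin (n+1))
    (h1 : x ≠ j.castSucc) (h2 : x ≠ j.succ) :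
    (w * simpleTransposition n j) x = w x := by
  simp [simpleTransposition, Equiv.Perm.mul_apply, Equiv.swap_apply_of_ne_of_ne h1 h2]

lemma invNum_mul_swap_of_ascent {w : Equiv.Perm (Fin (n + 1))} {j : Fin n}
    (h : w j.castSucc < w j.succ) :
    invNum n (w * simpleTransposition n j) = invNum n w + 1 := by
  have hmem : (j.castSucc, j.succ) ∈ invSet n (w * simpleTransposition n j) := by
    rw [pair_mem_iff, mul_swap_apply_succ, mul_swap_apply_castSucc]; exact h
  have hnmem : (j.castSucc, j.succ) ∉ invSet n w := by
    rw [pair_mem_iff]; exact not_lt.2 h.le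
  have h1 := Finset.card_erase_add_one hmem
  have h2 := Finset.erase_eq_of_notMem hnmem
  have h3 := card_erase_eq w j
  unfold invNum
  rw [← h1, h3, h2]

lemma invNum_mul_swap_of_descent {w : Equiv.Perm (Fin (n + 1))} {j : Fin n}
    (h : w j.succ < w j.castSucc) :
    invNum n (w * simpleTransposition n j) + 1 = invNum n w := by
  have hmem : (j.castSucc, j.succ) ∈ invSet n w := (pair_mem_iff w j).2 h
  have hnmem : (j.castSucc, j.succ) ∉ invSet n (w * simpleTransposition n j) := by
    rw [pair_mem_iff, mul_swap_apply_succ, mul_swap_apply_castSucc]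
    exact not_lt.2 h.le
  have h1 := Finset.card_erase_add_one hmem
  have h2 := Finset.erase_eq_of_notMem hnmem
  have h3 := card_erase_eq w j
  unfold invNum
  rw [← h1, ← h3, h2]

lemma invNum_mul_swap_le (w : Equiv.Perm (Fin (n + 1))) (j : Fin n) :
    invNum n (w * simpleTransposition n j) ≤ invNum n w + 1 := by
  rcases lt_trichotomy (w j.castSucc) (w j.succ) with h | h | h
  · exact (invNum_mul_swap_of_ascent h).le
  · exact absurd (w.injective h) (j.castSucc_lt_succ).ne
  · have := invNum_mul_swap_of_descent h; omega

lemma invNum_inv (w : Equiv.Perm (Fin (n + 1))) : invNum n w⁻¹ = invNum n w := by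
  unfold invNum
  refine Finset.card_bij' (fun p _ => (w⁻¹ p.2, w⁻¹ p.1)) (fun p _ => (w p.2, w p.1))
    ?_ ?_ ?_ ?_
  · intro p hp
    rw [mem_invSet] at hp ⊢
    simp only
    simp only [← Equiv.Perm.mul_apply, mul_inv_cancel, Equiv.Perm.one_apply]
    exact ⟨hp.2, hp.1⟩
  · intro p hp
    rw [mem_invSet] at hp ⊢
    simp only
    simp only [← Equiv.Perm.mul_apply, inv_mul_cancel, Equiv.Perm.one_apply]
    exact ⟨hp.2, hp.1⟩
  · intro p hp; simp
  · intro p hp; simp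

lemma invNum_one : invNum n (1 : Equiv.Perm (Fin (n + 1))) = 0 := by
  unfold invNum
  rw [Finset.card_eq_zero]
  ext p
  simp only [mem_invSet, Finset.notMem_empty, iff_false, Equiv.Perm.one_apply, not_and, not_lt]
  exact fun h => h.le

lemma invNum_swap_mul_le (w : Equiv.Perm (Fin (n + 1))) (j : Fin n) :
    invNum n (simpleTransposition n j * w) ≤ invNum n w + 1 := by
  have hsymm : (simpleTransposition n j)⁻¹ = simpleTransposition n j := by
    simp [simpleTransposition, Equiv.swap_inv]
  have h1 : (simpleTransposition n j * w)⁻¹ = w⁻¹ * simpleTransposition n j := by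
    rw [mul_inv_rev, hsymm]
  calc invNum n (simpleTransposition n j * w)
      = invNum n (w⁻¹ * simpleTransposition n j) := by rw [← invNum_inv, h1]
    _ ≤ invNum n w⁻¹ + 1 := invNum_mul_swap_le _ _
    _ = invNum n w + 1 := by rw [invNum_inv]

lemma invNum_wordProd_le (l : List (Fin n)) : invNum n (wordProd n l) ≤ l.length := by
  induction l with
  | nil => rw [wordProd_nil, invNum_one]; simp
  | cons j l ih =>
      rw [wordProd_cons]
      calc invNum n (simpleTransposition n j * wordProd n l)
          ≤ invNum n (wordProd n l) + 1 := invNum_swap_mul_le _ _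
        _ ≤ l.length + 1 := by omega
        _ = (j :: l).length := by simp

lemma eq_one_of_strictMono {w : Equiv.Perm (Fin (n + 1))} (hmono : StrictMono w) :
    w = 1 := by
  have hfn : (w : Fin (n+1) → Fin (n+1)) = id := by
    refine ((@StrictMono.range_inj (Fin (n+1)) (Fin (n+1)) _ _
      (inferInstance : WellFoundedLT (Fin (n+1))) w id) hmono strictMono_id).1 ?_
    rw [Set.range_id, Set.range_eq_univ.2 w.surjective]
  exact Equiv.ext fun x => congrFun hfn x

lemma eq_one_of_invNum_eq_zero {w : Equiv.Perm (Fin (n + 1))} (h : invNum n w = 0) :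
    w = 1 := by
  have hmono : StrictMono w := by
    intro a b hab
    rcases lt_trichotomy (w a) (w b) with h' | h' | h'
    · exact h'
    · exact absurd (w.injective h') hab.ne
    · exfalso
      have hm : (a, b) ∈ invSet n w := mem_invSet.2 ⟨hab, h'⟩
      have := Finset.card_pos.2 ⟨_, hm⟩
      unfold invNum at h; omega
  exact eq_one_of_strictMono hmono

lemma exists_reduced (w : Equiv.Perm (Fin (n + 1))) :
    ∃ l : List (Fin n), wordProd n l = w ∧ l.length = invNum n w := by
  generalize hN : invNum n w = N
  induction N generalizing w with
  | zero => exact ⟨[], by rw [wordProd_nil, eq_one_of_invNum_eq_zero hN], by simp [hN]⟩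
  | succ N ih =>
      have hne : w ≠ 1 := by
        intro h; rw [h, invNum_one] at hN; omega
      have hnm : ¬ StrictMono w := fun hmono => hne (eq_one_of_strictMono hmono)
      rw [Fin.strictMono_iff_lt_succ] at hnm
      push_neg at hnm
      obtain ⟨j, hj⟩ := hnm
      have hj' : w j.succ < w j.castSucc :=
        lt_of_le_of_ne hj (fun h => (j.castSucc_lt_succ).ne (w.injective h.symm))
      have hdec := invNum_mul_swap_of_descent hj'
      obtain ⟨l, hl, hlen⟩ := ih (w * simpleTransposition n j) (by omega)
      refine ⟨l ++ [j], ?_, ?_⟩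
      · rw [wordProd_append, hl, wordProd_singleton, mul_assoc]
        simp [simpleTransposition, Equiv.swap_mul_self]
      · simp only [List.length_append, List.length_singleton, hlen]

lemma invNum_mul_le (u v : Equiv.Perm (Fin (n + 1))) :
    invNum n (u * v) ≤ invNum n u + invNum n v := by
  obtain ⟨lu, hu, hlu⟩ := exists_reduced (n := n) u
  obtain ⟨lv, hv, hlv⟩ := exists_reduced (n := n) v
  have hconc : wordProd n (lu ++ lv) = u * v := by rw [wordProd_append, hu, hv]
  have h := invNum_wordProd_le (lu ++ lv)
  rw [hconc] at h
  simpa [hlu, hlv] using h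


/-- Key transport lemma: if `l` is a reduced word for `v` and lengths are additive for
`u * v`, then `v⁻¹` preserves the relative order of inversion pairs of `u`. -/
lemma lemC' {n : ℕ} (l : List (Fin n)) :
    ∀ (u : Equiv.Perm (Fin (n + 1))),
      l.length = invNum n (wordProd n l) →
      invNum n (u * wordProd n l) = invNum n u + invNum n (wordProd n l) →
      ∀ x y : Fin (n + 1), x < y → u y < u x →
        (wordProd n l)⁻¹ x < (wordProd n l)⁻¹ y := by
  induction l using List.reverseRecOn with
  | nil =>
      intro u _ _ x y hxy _
      simpa [wordProd_nil] using hxy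
  | append_singleton l' d ih =>
      intro u hlen hadd x y hxy huxy
      set v' := wordProd n l' with hv'
      have hprod : wordProd n (l' ++ [d]) = v' * simpleTransposition n d := by
        rw [wordProd_append, wordProd_singleton]
      rw [hprod] at hadd ⊢
      rw [hprod] at hlen
      -- basic length bookkeeping
      have h1 : invNum n v' ≤ l'.length := invNum_wordProd_le l'
      have h2 : invNum n (v' * simpleTransposition n d) ≤ invNum n v' + 1 :=
        invNum_mul_swap_le _ _
      have hlen' : l'.length + 1 = invNum n (v' * simpleTransposition n d) := by
        simpa using hlen
      have hv'len : l'.length = invNum n v' := by omega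
      have hvval : invNum n (v' * simpleTransposition n d) = invNum n v' + 1 := by omega
      -- additivity for u * v'
      have h3 : invNum n (u * v') ≤ invNum n u + invNum n v' := invNum_mul_le u v'
      have h4 : invNum n (u * v' * simpleTransposition n d) ≤ invNum n (u * v') + 1 :=
        invNum_mul_swap_le _ _
      have hassoc : u * (v' * simpleTransposition n d) = u * v' * simpleTransposition n d := by
        rw [mul_assoc]
      rw [hassoc] at hadd
      have hadd' : invNum n (u * v') = invNum n u + invNum n v' := by omega
      have hstep : invNum n (u * v' * simpleTransposition n d) = invNum n (u * v') + 1 := by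
        omega
      -- the pair (d, d+1) is an ascent of u * v'
      have hascent : (u * v') d.castSucc < (u * v') d.succ := by
        rcases lt_trichotomy ((u * v') d.castSucc) ((u * v') d.succ) with h | h | h
        · exact h
        · exact absurd ((u * v').injective h) (d.castSucc_lt_succ).ne
        · have := invNum_mul_swap_of_descent h
          omega
      -- apply induction hypothesis
      have hab := ih u hv'len hadd' x y hxy huxy
      set a := v'⁻¹ x with ha
      set b := v'⁻¹ y with hb
      have hne : ¬(a = d.castSucc ∧ b = d.succ) := by
        rintro ⟨rfl2, rfl3⟩
        have e1 : (u * v') a = u x := by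
          simp [Equiv.Perm.mul_apply, ha]
        have e2 : (u * v') b = u y := by
          simp [Equiv.Perm.mul_apply, hb]
        rw [rfl2] at e1
        rw [rfl3] at e2
        rw [e1, e2] at hascent
        exact absurd hascent (not_lt.2 huxy.le)
      have hsab : Equiv.swap d.castSucc d.succ a < Equiv.swap d.castSucc d.succ b :=
        swap_lt hab hne
      have hst : (simpleTransposition n d)⁻¹ = simpleTransposition n d := by
        simp [simpleTransposition, Equiv.swap_inv]
      have hinv : (v' * simpleTransposition n d)⁻¹ = simpleTransposition n d * v'⁻¹ := by
        rw [mul_inv_rev, hst]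
      rw [hinv]
      simpa [simpleTransposition, Equiv.Perm.mul_apply, ← ha, ← hb] using hsab

/-- Right-factor version: under additivity, inversions of the right factor `v`
remain inversions of `u * v`. -/
lemma lemC {n : ℕ} (u v : Equiv.Perm (Fin (n + 1)))
    (hadd : invNum n (u * v) = invNum n u + invNum n v) :
    ∀ a b : Fin (n + 1), a < b → v b < v a → (u * v) b < (u * v) a := by
  intro a b hab hvab
  obtain ⟨l, hl, hlen⟩ := exists_reduced (n := n) u⁻¹
  have hadd2 : invNum n (v⁻¹ * wordProd n l) = invNum n v⁻¹ + invNum n (wordProd n l) := by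
    rw [hl]
    have : v⁻¹ * u⁻¹ = (u * v)⁻¹ := by rw [mul_inv_rev]
    rw [this, invNum_inv, invNum_inv, invNum_inv, hadd]
    omega
  have hlen2 : l.length = invNum n (wordProd n l) := by rw [hl]; exact hlen
  have key := lemC' l (v⁻¹) hlen2 hadd2 (v b) (v a) hvab (by
    simp only [← Equiv.Perm.mul_apply, inv_mul_cancel, Equiv.Perm.one_apply]; exact hab)
  rw [hl] at key
  -- key : (u⁻¹)⁻¹ (v b) < (u⁻¹)⁻¹ (v a)
  rw [inv_inv] at key
  simpa [Equiv.Perm.mul_apply] using key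

end Aux321

namespace Aux321

variable {n : ℕ}

lemma reduced_length {w : Equiv.Perm (Fin (n + 1))} {l : List (Fin n)}
    (h : IsReducedWord n w l) : l.length = invNum n w := by
  obtain ⟨l0, hl0, hlen0⟩ := exists_reduced (n := n) w
  have h1 : l.length ≤ l0.length := h.2 l0 hl0
  have h2 : invNum n w ≤ l.length := by
    have := invNum_wordProd_le l
    rwa [h.1] at this
  omega

section Braid

variable (j j' : Fin n) (hjj : (j' : ℕ) = (j : ℕ) + 1)

lemma succ_eq_castSucc (hjj : (j' : ℕ) = (j : ℕ) + 1) : j.succ = j'.castSucc := by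
  apply Fin.ext
  simp [hjj]

lemma braid_lt1 : j.castSucc < j.succ := j.castSucc_lt_succ
lemma braid_lt2 (hjj : (j' : ℕ) = (j : ℕ) + 1) : j.succ < j'.succ := by
  rw [Fin.lt_def]
  simp [hjj]
lemma braid_lt3 (hjj : (j' : ℕ) = (j : ℕ) + 1) : j.castSucc < j'.succ := by
  rw [Fin.lt_def]
  simp [hjj]

lemma braid_prod_eq : wordProd n [j, j', j]
    = simpleTransposition n j * simpleTransposition n j' * simpleTransposition n j := by
  simp [wordProd, mul_assoc]

lemma braid_apply0 (hjj : (j' : ℕ) = (j : ℕ) + 1) :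
    wordProd n [j, j', j] j.castSucc = j'.succ := by
  rw [braid_prod_eq]
  simp only [Equiv.Perm.mul_apply, simpleTransposition]
  have e1 : Equiv.swap j.castSucc j.succ j.castSucc = j'.castSucc := by
    rw [Equiv.swap_apply_left, succ_eq_castSucc j j' hjj]
  rw [e1, Equiv.swap_apply_left]
  exact Equiv.swap_apply_of_ne_of_ne (braid_lt3 j j' hjj).ne' (braid_lt2 j j' hjj).ne'

lemma braid_apply1 (hjj : (j' : ℕ) = (j : ℕ) + 1) :
    wordProd n [j, j', j] j.succ = j.succ := by
  rw [braid_prod_eq]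
  simp only [Equiv.Perm.mul_apply, simpleTransposition]
  rw [Equiv.swap_apply_right]
  have h1 : j.castSucc ≠ j'.castSucc := by
    rw [← succ_eq_castSucc j j' hjj]; exact (j.castSucc_lt_succ).ne
  have h2 : j.castSucc ≠ j'.succ := (braid_lt3 j j' hjj).ne
  rw [Equiv.swap_apply_of_ne_of_ne h1 h2, Equiv.swap_apply_left]

lemma braid_apply2 (hjj : (j' : ℕ) = (j : ℕ) + 1) :
    wordProd n [j, j', j] j'.succ = j.castSucc := by
  rw [braid_prod_eq]
  simp only [Equiv.Perm.mul_apply, simpleTransposition]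
  have h1 : j'.succ ≠ j.castSucc := (braid_lt3 j j' hjj).ne'
  have h2 : j'.succ ≠ j.succ := (braid_lt2 j j' hjj).ne'
  rw [Equiv.swap_apply_of_ne_of_ne h1 h2, Equiv.swap_apply_right,
    ← succ_eq_castSucc j j' hjj, Equiv.swap_apply_right]

lemma braid_invNum (hjj : (j' : ℕ) = (j : ℕ) + 1) :
    invNum n (wordProd n [j, j', j]) = 3 := by
  have hle : invNum n (wordProd n [j, j', j]) ≤ 3 := invNum_wordProd_le _
  set t := wordProd n [j, j', j] with ht
  have h01 : (j.castSucc, j.succ) ∈ invSet n t := by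
    rw [mem_invSet]
    refine ⟨j.castSucc_lt_succ, ?_⟩
    rw [braid_apply1 j j' hjj, braid_apply0 j j' hjj]
    exact braid_lt2 j j' hjj
  have h02 : (j.castSucc, j'.succ) ∈ invSet n t := by
    rw [mem_invSet]
    refine ⟨braid_lt3 j j' hjj, ?_⟩
    rw [braid_apply2 j j' hjj, braid_apply0 j j' hjj]
    exact braid_lt3 j j' hjj
  have h12 : (j.succ, j'.succ) ∈ invSet n t := by
    rw [mem_invSet]
    refine ⟨braid_lt2 j j' hjj, ?_⟩
    rw [braid_apply2 j j' hjj, braid_apply1 j j' hjj]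
    exact j.castSucc_lt_succ
  have hsub : ({(j.castSucc, j.succ), (j.castSucc, j'.succ), (j.succ, j'.succ)} :
      Finset (Fin (n+1) × Fin (n+1))) ⊆ invSet n t := by
    intro p hp
    simp only [Finset.mem_insert, Finset.mem_singleton] at hp
    rcases hp with rfl | rfl | rfl <;> assumption
  have hcard : ({(j.castSucc, j.succ), (j.castSucc, j'.succ), (j.succ, j'.succ)} :
      Finset (Fin (n+1) × Fin (n+1))).card = 3 := by
    have d1 : j.succ ≠ j'.succ := (braid_lt2 j j' hjj).ne
    have d2 : j.castSucc ≠ j.succ := (j.castSucc_lt_succ).ne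
    have d3 : j.castSucc ≠ j'.succ := (braid_lt3 j j' hjj).ne
    rw [Finset.card_insert_of_notMem, Finset.card_insert_of_notMem,
      Finset.card_singleton]
    · simp [Prod.ext_iff, d1, d2, d3]
    · simp [Prod.ext_iff, d1, d2, d3]
  have hge : 3 ≤ invNum n t := by
    rw [← hcard]
    exact Finset.card_le_card hsub
  omega

end Braid

lemma pattern_of_braid {w : Equiv.Perm (Fin (n + 1))} {l : List (Fin n)}
    (hprod : wordProd n l = w) (hlen : l.length = invNum n w)
    {j j' : Fin n} (hjj : (j' : ℕ) = (j : ℕ) + 1) (hinf : [j, j', j] <:+: l) :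
    ∃ a b c : Fin (n + 1), a < b ∧ b < c ∧ w c < w b ∧ w b < w a := by
  obtain ⟨l1, l2, hsplit⟩ := hinf
  set u := wordProd n l1 with hu
  set t := wordProd n [j, j', j] with ht
  set v := wordProd n l2 with hv
  have hw : w = u * (t * v) := by
    rw [← hprod, ← hsplit, wordProd_append, wordProd_append, mul_assoc]
  have hlength : l1.length + 3 + l2.length = invNum n w := by
    rw [← hlen, ← hsplit]
    simp
    omega
  have hb1 : invNum n u ≤ l1.length := invNum_wordProd_le l1
  have hb2 : invNum n v ≤ l2.length := invNum_wordProd_le l2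
  have hb3 : invNum n t = 3 := braid_invNum j j' hjj
  have hb4 : invNum n (t * v) ≤ invNum n t + invNum n v := invNum_mul_le t v
  have hb5 : invNum n (u * (t * v)) ≤ invNum n u + invNum n (t * v) := invNum_mul_le _ _
  have hb6 : invNum n (u * (t * v)) = invNum n w := by rw [← hw]
  have hadd1 : invNum n (u * (t * v)) = invNum n u + invNum n (t * v) := by omega
  have hadd2 : invNum n (t * v) = invNum n t + invNum n v := by omega
  have hlenv : l2.length = invNum n v := by omega
  -- positions
  set p0 := j.castSucc
  set p1 := j.succ
  set p2 := j'.succ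
  set A := v⁻¹ p0 with hA
  set B := v⁻¹ p1 with hB
  set C := v⁻¹ p2 with hC
  have key := fun (x y : Fin (n+1)) (h1 : x < y) (h2 : t y < t x) =>
    lemC' l2 t hlenv (by exact hadd2) x y h1 h2
  have hAB : A < B := key p0 p1 (j.castSucc_lt_succ) (by
    rw [ht, braid_apply1 j j' hjj, braid_apply0 j j' hjj]; exact braid_lt2 j j' hjj)
  have hBC : B < C := key p1 p2 (braid_lt2 j j' hjj) (by
    rw [ht, braid_apply2 j j' hjj, braid_apply1 j j' hjj]; exact j.castSucc_lt_succ)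
  have key2 := lemC u (t * v) hadd1
  have htv : ∀ x : Fin (n+1), (t * v) (v⁻¹ x) = t x := by
    intro x; simp [Equiv.Perm.mul_apply]
  have hwBA : w B < w A := by
    rw [hw]
    apply key2 A B hAB
    rw [hA, hB, htv, htv, ht, braid_apply1 j j' hjj, braid_apply0 j j' hjj]
    exact braid_lt2 j j' hjj
  have hwCB : w C < w B := by
    rw [hw]
    apply key2 B C hBC
    rw [hB, hC, htv, htv, ht, braid_apply2 j j' hjj, braid_apply1 j j' hjj]
    exact j.castSucc_lt_succ
  exact ⟨A, B, C, hAB, hBC, hwCB, hwBA⟩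

end Aux321

namespace Aux321

variable {n : ℕ}

lemma chain_lt (w : Equiv.Perm (Fin (n + 1))) :
    ∀ (k : ℕ) (b c : Fin (n + 1)), (c : ℕ) = (b : ℕ) + k + 1 →
      (∀ j : Fin n, b ≤ j.castSucc → j.succ ≤ c → w j.castSucc < w j.succ) →
      w b < w c := by
  intro k
  induction k with
  | zero =>
      intro b c hc h
      have hbn : (b : ℕ) < n := by have := c.isLt; omega
      set j : Fin n := ⟨b, hbn⟩ with hj
      have e1 : j.castSucc = b := by apply Fin.ext; simp [hj]
      have e2 : j.succ = c := by apply Fin.ext; simp [hj, hc]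
      have := h j (by rw [e1]) (by rw [e2])
      rwa [e1, e2] at this
  | succ k ih =>
      intro b c hc h
      have hc'lt : (b : ℕ) + k + 1 < n + 1 := by have := c.isLt; omega
      set c' : Fin (n + 1) := ⟨b + k + 1, hc'lt⟩ with hc'
      have h1 : w b < w c' := by
        refine ih b c' (by simp [hc']) ?_
        intro j hj1 hj2
        refine h j hj1 (le_trans hj2 ?_)
        rw [Fin.le_def]
        simp [hc', hc]
      have hjn : (c' : ℕ) < n := by have := c.isLt; simp [hc']; omega
      set j : Fin n := ⟨c', hjn⟩ with hj
      have e1 : j.castSucc = c' := by apply Fin.ext; simp [hj]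
      have e2 : j.succ = c := by apply Fin.ext; simp [hj, hc, hc']; omega
      have h2 := h j (by rw [e1, Fin.le_def]; simp [hc']; omega) (by rw [e2])
      rw [e1, e2] at h2
      exact h1.trans h2

lemma exists_descent (w : Equiv.Perm (Fin (n + 1))) (b c : Fin (n + 1))
    (hbc : b < c) (hval : w c < w b) :
    ∃ j : Fin n, b ≤ j.castSucc ∧ j.succ ≤ c ∧ w j.succ < w j.castSucc := by
  by_contra hcon
  push_neg at hcon
  have hchain : w b < w c := by
    refine chain_lt w ((c : ℕ) - (b : ℕ) - 1) b c (by rw [Fin.lt_def] at hbc; omega) ?_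
    intro j h1 h2
    refine lt_of_le_of_ne (hcon j h1 h2) ?_
    intro heq
    exact (j.castSucc_lt_succ).ne (w.injective heq)
  exact absurd hval (not_lt.2 hchain.le)

/-- The result type for direction A. -/
def HasBraidReduced (w : Equiv.Perm (Fin (n + 1))) : Prop :=
  ∃ l : List (Fin n), wordProd n l = w ∧ l.length = invNum n w ∧
    ∃ j j' : Fin n, (j' : ℕ) = (j : ℕ) + 1 ∧ [j, j', j] <:+: l

lemma braid_case (w : Equiv.Perm (Fin (n + 1))) (j j' : Fin n)
    (hjj : (j' : ℕ) = (j : ℕ) + 1)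
    (h1 : w j.succ < w j.castSucc) (h2 : w j'.succ < w j'.castSucc) :
    HasBraidReduced w := by
  have hcs : j.succ = j'.castSucc := succ_eq_castSucc j j' hjj
  set s1 := simpleTransposition n j with hs1
  set s2 := simpleTransposition n j' with hs2
  -- first step
  set w1 := w * s1 with hw1
  have hinv1 : invNum n w1 + 1 = invNum n w := invNum_mul_swap_of_descent h1
  -- second step
  have hw1c : w1 j'.castSucc = w j.castSucc := by
    rw [← hcs, hw1, hs1, mul_swap_apply_succ]
  have hw1s : w1 j'.succ = w j'.succ := by
    rw [hw1, hs1]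
    exact mul_swap_apply_of_ne w j j'.succ (braid_lt3 j j' hjj).ne' (braid_lt2 j j' hjj).ne'
  have hd2 : w1 j'.succ < w1 j'.castSucc := by
    rw [hw1c, hw1s]
    calc w j'.succ < w j'.castSucc := h2
      _ = w j.succ := by rw [hcs]
      _ < w j.castSucc := h1
  set w2 := w1 * s2 with hw2
  have hinv2 : invNum n w2 + 1 = invNum n w1 := invNum_mul_swap_of_descent hd2
  -- third step
  have hw2c : w2 j.castSucc = w j.succ := by
    rw [hw2, hs2]
    have hne1 : j.castSucc ≠ j'.castSucc := by
      rw [← hcs]; exact (j.castSucc_lt_succ).ne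
    have hne2 : j.castSucc ≠ j'.succ := (braid_lt3 j j' hjj).ne
    rw [mul_swap_apply_of_ne w1 j' j.castSucc hne1 hne2, hw1, hs1, mul_swap_apply_castSucc]
  have hw2s : w2 j.succ = w j'.succ := by
    rw [hw2, hs2, hcs, mul_swap_apply_castSucc, hw1s]
  have hd3 : w2 j.succ < w2 j.castSucc := by
    rw [hw2c, hw2s]
    calc w j'.succ < w j'.castSucc := h2
      _ = w j.succ := by rw [hcs]
  set w3 := w2 * s1 with hw3
  have hinv3 : invNum n w3 + 1 = invNum n w2 := invNum_mul_swap_of_descent hd3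
  obtain ⟨l3, hl3, hlen3⟩ := exists_reduced (n := n) w3
  refine ⟨l3 ++ [j, j', j], ?_, ?_, j, j', hjj, ⟨l3, [], by simp⟩⟩
  · rw [wordProd_append, hl3, braid_prod_eq, ← hs1, ← hs2]
    have cancel : ∀ (x : Equiv.Perm (Fin (n+1))) (k : Fin n),
        simpleTransposition n k * (simpleTransposition n k * x) = x := by
      intro x k
      rw [← mul_assoc]
      simp [simpleTransposition, Equiv.swap_mul_self]
    have hs1sq : s1 * s1 = 1 := by simp [hs1, simpleTransposition, Equiv.swap_mul_self]
    rw [hw3, hw2, hw1]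
    simp only [mul_assoc, cancel, hs1sq, mul_one]
    simp only [hs1, hs2, cancel]
    simp [simpleTransposition, Equiv.swap_mul_self]
  · simp only [List.length_append]
    simp [hlen3]
    omega

end Aux321

namespace Aux321

variable {n : ℕ}

lemma braid_of_pattern : ∀ (N : ℕ) (w : Equiv.Perm (Fin (n + 1))), invNum n w ≤ N →
    (∃ a b c : Fin (n + 1), a < b ∧ b < c ∧ w c < w b ∧ w b < w a) →
    HasBraidReduced w := by
  intro N
  induction N with
  | zero =>
      intro w hw ⟨a, b, c, hab, hbc, hv1, hv2⟩
      exfalso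
      have hm : (b, c) ∈ invSet n w := mem_invSet.2 ⟨hbc, hv1⟩
      have := Finset.card_pos.2 ⟨_, hm⟩
      unfold invNum at hw
      omega
  | succ N ih =>
      intro w hw ⟨a, b, c, hab, hbc, hv1, hv2⟩
      have dostep : ∀ j : Fin n, w j.succ < w j.castSucc →
          (∃ a b c : Fin (n + 1), a < b ∧ b < c ∧
            (w * simpleTransposition n j) c < (w * simpleTransposition n j) b ∧
            (w * simpleTransposition n j) b < (w * simpleTransposition n j) a) →
          HasBraidReduced w := by
        intro j hd hp
        have hinv := invNum_mul_swap_of_descent hd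
        obtain ⟨l', hl1, hl2, jj, jj', hjj, hinf⟩ :=
          ih (w * simpleTransposition n j) (by omega) hp
        refine ⟨l' ++ [j], ?_, ?_, jj, jj', hjj,
          hinf.trans (List.prefix_append l' [j]).isInfix⟩
        · rw [wordProd_append, hl1, wordProd_singleton, mul_assoc]
          simp [simpleTransposition, Equiv.swap_mul_self]
        · simp only [List.length_append, List.length_singleton, hl2]
          omega
      obtain ⟨j1, hb1, hc1, hd1⟩ := exists_descent w b c hbc hv1
      rcases lt_or_eq_of_le hc1 with hC | hC
      · -- j1.succ < c
        rcases lt_or_eq_of_le hb1 with hB | hB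
        · -- b < j1.castSucc : pattern (a, b, c) survives
          apply dostep j1 hd1
          have ec : (w * simpleTransposition n j1) c = w c :=
            mul_swap_apply_of_ne w j1 c ((j1.castSucc_lt_succ).trans hC).ne' hC.ne'
          have eb : (w * simpleTransposition n j1) b = w b :=
            mul_swap_apply_of_ne w j1 b hB.ne (hB.trans (j1.castSucc_lt_succ)).ne
          have ea : (w * simpleTransposition n j1) a = w a :=
            mul_swap_apply_of_ne w j1 a (hab.trans hB).ne
              ((hab.trans hB).trans (j1.castSucc_lt_succ)).ne
          exact ⟨a, b, c, hab, hbc, by rw [ec, eb]; exact hv1, by rw [eb, ea]; exact hv2⟩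
        · -- b = j1.castSucc : pattern (a, j1.succ, c)
          apply dostep j1 hd1
          have hab' : a < j1.castSucc := hab.trans_eq hB
          have ec : (w * simpleTransposition n j1) c = w c :=
            mul_swap_apply_of_ne w j1 c ((j1.castSucc_lt_succ).trans hC).ne' hC.ne'
          have es : (w * simpleTransposition n j1) j1.succ = w b := by
            rw [mul_swap_apply_succ, ← hB]
          have ea : (w * simpleTransposition n j1) a = w a :=
            mul_swap_apply_of_ne w j1 a hab'.ne (hab'.trans (j1.castSucc_lt_succ)).ne
          exact ⟨a, j1.succ, c, hab'.trans (j1.castSucc_lt_succ), hC,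
            by rw [ec, es]; exact hv1, by rw [es, ea]; exact hv2⟩
      · -- j1.succ = c
        rcases lt_or_eq_of_le hb1 with hB | hB
        · -- b < j1.castSucc : pattern (a, b, j1.castSucc)
          apply dostep j1 hd1
          have es : (w * simpleTransposition n j1) j1.castSucc = w c := by
            rw [mul_swap_apply_castSucc, hC]
          have eb : (w * simpleTransposition n j1) b = w b :=
            mul_swap_apply_of_ne w j1 b hB.ne (hB.trans (j1.castSucc_lt_succ)).ne
          have ea : (w * simpleTransposition n j1) a = w a :=
            mul_swap_apply_of_ne w j1 a (hab.trans hB).ne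
              ((hab.trans hB).trans (j1.castSucc_lt_succ)).ne
          exact ⟨a, b, j1.castSucc, hab, hB,
            by rw [es, eb]; exact hv1, by rw [eb, ea]; exact hv2⟩
        · -- b = j1.castSucc and c = j1.succ
          obtain ⟨j2, ha2, hb2, hd2⟩ := exists_descent w a b hab hv2
          rcases lt_or_eq_of_le hb2 with hB2 | hB2
          · -- j2.succ < b
            rcases lt_or_eq_of_le ha2 with hA2 | hA2
            · -- a < j2.castSucc : pattern (a, b, c) survives
              apply dostep j2 hd2
              have hcb : j2.succ < c := hB2.trans hbc
              have ec : (w * simpleTransposition n j2) c = w c :=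
                mul_swap_apply_of_ne w j2 c
                  ((j2.castSucc_lt_succ).trans hcb).ne' hcb.ne'
              have eb : (w * simpleTransposition n j2) b = w b :=
                mul_swap_apply_of_ne w j2 b
                  ((j2.castSucc_lt_succ).trans hB2).ne' hB2.ne'
              have ea : (w * simpleTransposition n j2) a = w a :=
                mul_swap_apply_of_ne w j2 a hA2.ne
                  (hA2.trans (j2.castSucc_lt_succ)).ne
              exact ⟨a, b, c, hab, hbc,
                by rw [ec, eb]; exact hv1, by rw [eb, ea]; exact hv2⟩
            · -- a = j2.castSucc : pattern (j2.succ, b, c)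
              apply dostep j2 hd2
              have hcb : j2.succ < c := hB2.trans hbc
              have ec : (w * simpleTransposition n j2) c = w c :=
                mul_swap_apply_of_ne w j2 c
                  ((j2.castSucc_lt_succ).trans hcb).ne' hcb.ne'
              have eb : (w * simpleTransposition n j2) b = w b :=
                mul_swap_apply_of_ne w j2 b
                  ((j2.castSucc_lt_succ).trans hB2).ne' hB2.ne'
              have es : (w * simpleTransposition n j2) j2.succ = w a := by
                rw [mul_swap_apply_succ, ← hA2]
              exact ⟨j2.succ, b, c, hB2, hbc,
                by rw [ec, eb]; exact hv1, by rw [eb, es]; exact hv2⟩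
          · -- j2.succ = b : braid!
            have hjj : (j1 : ℕ) = (j2 : ℕ) + 1 := by
              have e1 : ((j2.succ : Fin (n+1)) : ℕ) = (j2 : ℕ) + 1 := rfl
              have e2 : ((j1.castSucc : Fin (n+1)) : ℕ) = (j1 : ℕ) := rfl
              have h3 : (b : ℕ) = (j2 : ℕ) + 1 := by rw [← hB2]; exact e1
              have h4 : (b : ℕ) = (j1 : ℕ) := by rw [hB]; exact e2
              omega
            exact braid_case w j2 j1 hjj hd2 hd1

end Aux321

theorem is321Avoiding_iff_no_jjpj (n : ℕ) (w : Equiv.Perm (Fin (n + 1))) :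
    Is321Avoiding n w ↔
      ∀ l : List (Fin n), IsReducedWord n w l →
        ¬ ∃ j j' : Fin n, (j' : ℕ) = (j : ℕ) + 1 ∧ [j, j', j] <:+: l := by
  constructor
  · rintro hav l hred ⟨j, j', hjj, hinf⟩
    exact hav (Aux321.pattern_of_braid hred.1 (Aux321.reduced_length hred) hjj hinf)
  · intro h hpat
    obtain ⟨a, b, c, hab, hbc, hv1, hv2⟩ := hpat
    obtain ⟨l, h1, h2, j, j', hjj, hinf⟩ :=
      Aux321.braid_of_pattern (Aux321.invNum n w) w le_rfl ⟨a, b, c, hab, hbc, hv1, hv2⟩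
    refine h l ⟨h1, ?_⟩ ⟨j, j', hjj, hinf⟩
    intro l' hl'
    rw [h2]
    have := Aux321.invNum_wordProd_le l'
    rw [hl'] at this
    omega
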